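/- Let ρ : ℝ → ℂ be a Schwartz function with ∫_ℝ ρ(x) dx = 1 and ∫_ℝ x^k ρ(x) dx = 0 for every integer k ≥ 1, and set ρ_ε(x) = ε^{−1} ρ(x/ε) for ε ∈ (0,1]. If f belongs to 𝓑_ap, then the net (f * ρ_ε − f)_{ε∈(0,1]} is negligible: for every k ∈ ℕ and every m ∈ ℕ there exist C > 0 and ε₀ ∈ (0,1] such that |f * ρ_ε − f|_{k,∞} ≤ C ε^{m} for all ε ≤ ε₀. (Hence the canonical embedding of 𝓑_ap and the regularization embedding into 𝓖_ap coincide.) -/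

import Mathlib

set_option maxRecDepth 8000

open Filter MeasureTheory Topology

noncomputable section

/-- A function `f : ℝ → ℂ` is almost periodic in the sense of Bochner: it is continuous
and from every sequence of real translates one can extract a subsequence along which
the translates converge uniformly on `ℝ`. -/
def AlmostPeriodic (f : ℝ → ℂ) : Prop :=
  Continuous f ∧ ∀ h : ℕ → ℝ, ∃ φ : ℕ → ℕ, StrictMono φ ∧ ∃ g : ℝ → ℂ,
    TendstoUniformly (fun k x => f (x + h (φ k))) g atTop

/-- `f ∈ 𝓑_ap` : `f` is smooth and every derivative of `f` is almost periodic. -/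
def BAp (f : ℝ → ℂ) : Prop :=
  ContDiff ℝ (⊤ : ℕ∞) f ∧ ∀ j : ℕ, AlmostPeriodic (iteratedDeriv j f)

/-- The seminorm `|f|_{k,∞} = Σ_{j ≤ k} sup_{x ∈ ℝ} ‖f^{(j)}(x)‖`. -/
def apSeminorm (k : ℕ) (f : ℝ → ℂ) : ℝ :=
  ∑ j ∈ Finset.range (k + 1), ⨆ x : ℝ, ‖iteratedDeriv j f x‖

/-- A net `(u_ε)_{ε ∈ (0,1]}` is moderate. -/
def Moderate (u : ℝ → ℝ → ℂ) : Prop :=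
  ∀ k : ℕ, ∃ m : ℕ, ∃ C > 0, ∃ ε₀ ∈ Set.Ioc (0:ℝ) 1,
    ∀ ε ∈ Set.Ioc (0:ℝ) 1, ε ≤ ε₀ → apSeminorm k (u ε) ≤ C / ε ^ m

/-- A net `(u_ε)_{ε ∈ (0,1]}` is negligible. -/
def Negligible (u : ℝ → ℝ → ℂ) : Prop :=
  ∀ k m : ℕ, ∃ C > 0, ∃ ε₀ ∈ Set.Ioc (0:ℝ) 1,
    ∀ ε ∈ Set.Ioc (0:ℝ) 1, ε ≤ ε₀ → apSeminorm k (u ε) ≤ C * ε ^ m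

/-! ### Auxiliary lemmas -/

lemma AlmostPeriodic.exists_bound {f : ℝ → ℂ} (h : AlmostPeriodic f) :
    ∃ M : ℝ, ∀ x, ‖f x‖ ≤ M := by
  by_contra hc
  push_neg at hc
  choose x hx using fun n : ℕ => hc n
  obtain ⟨φ, hφ, g, hg⟩ := h.2 x
  have h0 : Tendsto (fun k => ‖f (0 + x (φ k))‖) atTop (𝓝 ‖g 0‖) :=
    (hg.tendsto_at 0).norm
  have hb : ∀ᶠ k in atTop, ‖f (0 + x (φ k))‖ < ‖g 0‖ + 1 :=
    h0.eventually_lt_const (by linarith)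
  have h2 : ∀ᶠ k : ℕ in atTop, ‖g 0‖ + 1 ≤ (k : ℝ) :=
    tendsto_natCast_atTop_atTop.eventually_ge_atTop _
  obtain ⟨kk, hk1, hk2⟩ := (hb.and h2).exists
  have h3 : (kk : ℝ) ≤ (φ kk : ℝ) := by exact_mod_cast hφ.le_apply
  have h4 : ((φ kk : ℕ) : ℝ) < ‖f (x (φ kk))‖ := hx (φ kk)
  rw [zero_add] at hk1
  linarith

lemma ap_iteratedDeriv_smooth {f : ℝ → ℂ} (hf : ContDiff ℝ (⊤ : ℕ∞) f) (j : ℕ) :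
    ContDiff ℝ (⊤ : ℕ∞) (iteratedDeriv j f) := by
  rw [iteratedDeriv_eq_iterate]
  exact_mod_cast ContDiff.iterate_deriv j (by exact_mod_cast hf)

lemma ap_iteratedDeriv_iteratedDeriv {f : ℝ → ℂ} (i j : ℕ) :
    iteratedDeriv i (iteratedDeriv j f) = iteratedDeriv (i + j) f := by
  induction i with
  | zero => simp
  | succ i ih => rw [iteratedDeriv_succ, ih, ← iteratedDeriv_succ]; ring_nf

lemma ap_psi_integrable (ρ : SchwartzMap ℝ ℂ) (i : ℕ) :
    Integrable (fun z : ℝ => (-(z : ℂ)) ^ i * ρ z) := by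
  refine (ρ.integrable_pow_mul volume i).mono'
    (((Complex.continuous_ofReal.neg.pow i).mul ρ.continuous).aestronglyMeasurable)
    (Eventually.of_forall fun z => ?_)
  rw [norm_mul, norm_pow, norm_neg, Complex.norm_real]

lemma ap_psi_abs_integrable (ρ : SchwartzMap ℝ ℂ) (i : ℕ) :
    Integrable (fun z : ℝ => |z| * ‖(-(z : ℂ)) ^ i * ρ z‖) := by
  refine (ρ.integrable_pow_mul volume (i + 1)).mono'
    (continuous_abs.mul (((Complex.continuous_ofReal.neg.pow i).mul
      ρ.continuous).norm) |>.aestronglyMeasurable)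
    (Eventually.of_forall fun z => ?_)
  have h0 : (0:ℝ) ≤ |z| * ‖(-(z : ℂ)) ^ i * ρ z‖ := by positivity
  rw [Real.norm_eq_abs, abs_of_nonneg h0, norm_mul, norm_pow, norm_neg, Complex.norm_real,
    Real.norm_eq_abs]
  exact le_of_eq (by ring)

lemma ap_hasDerivAt_param (g : ℝ → ℂ) (hg : ContDiff ℝ (⊤ : ℕ∞) g) {M M' : ℝ}
    (hM : ∀ t, ‖g t‖ ≤ M) (hM' : ∀ t, ‖deriv g t‖ ≤ M')
    (w : ℝ → ℂ) (hw : Integrable w) (c x₀ : ℝ) :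
    HasDerivAt (fun x => ∫ z : ℝ, g (x - c * z) * w z)
      (∫ z : ℝ, deriv g (x₀ - c * z) * w z) x₀ := by
  have hgc : Continuous g := hg.continuous
  have hgd : Continuous (deriv g) := hg.continuous_deriv (by exact_mod_cast le_top)
  have key := hasDerivAt_integral_of_dominated_loc_of_deriv_le (μ := volume)
    (F := fun x z => g (x - c * z) * w z)
    (F' := fun x z => deriv g (x - c * z) * w z)
    (x₀ := x₀) (bound := fun z => M' * ‖w z‖) (Metric.ball_mem_nhds x₀ one_pos)
    (Eventually.of_forall fun x =>
      ((hgc.comp (by continuity)).aestronglyMeasurable.mul hw.1))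
    (((hw.norm.const_mul M).mono'
      ((hgc.comp (by continuity)).aestronglyMeasurable.mul hw.1)
      (Eventually.of_forall fun z => by
        rw [norm_mul]
        exact mul_le_mul_of_nonneg_right (hM _) (norm_nonneg _))))
    ((hgd.comp (by continuity)).aestronglyMeasurable.mul hw.1)
    (Eventually.of_forall fun z x _ => by
      rw [norm_mul]
      exact mul_le_mul_of_nonneg_right (hM' _) (norm_nonneg _))
    (hw.norm.const_mul M')
    (Eventually.of_forall fun z x _ => by
      have hin : HasDerivAt (fun x : ℝ => x - c * z) 1 x := (hasDerivAt_id x).sub_const _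
      have hd : HasDerivAt g (deriv g (x - c * z)) (x - c * z) :=
        ((hg.differentiable (by simp)) (x - c * z)).hasDerivAt
      have := (hd.scomp x hin).mul_const (w z)
      simpa [Function.comp] using this)
  exact key.2

lemma ap_hasDerivAt_param' (g : ℝ → ℂ) (hg : ContDiff ℝ (⊤ : ℕ∞) g) {M M' : ℝ}
    (hM : ∀ t, ‖g t‖ ≤ M) (hM' : ∀ t, ‖deriv g t‖ ≤ M')
    (w : ℝ → ℂ) (hw : Integrable w) (hw1 : Integrable (fun z => |z| * ‖w z‖))
    (x c₀ : ℝ) :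
    HasDerivAt (fun c => ∫ z : ℝ, g (x - c * z) * w z)
      (∫ z : ℝ, ((-z : ℝ) • deriv g (x - c₀ * z)) * w z) c₀ := by
  have hgc : Continuous g := hg.continuous
  have hgd : Continuous (deriv g) := hg.continuous_deriv (by exact_mod_cast le_top)
  have key := hasDerivAt_integral_of_dominated_loc_of_deriv_le (μ := volume)
    (F := fun c z => g (x - c * z) * w z)
    (F' := fun c z => ((-z : ℝ) • deriv g (x - c * z)) * w z)
    (x₀ := c₀) (bound := fun z => M' * (|z| * ‖w z‖)) (Metric.ball_mem_nhds c₀ one_pos)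
    (Eventually.of_forall fun c =>
      ((hgc.comp (by continuity)).aestronglyMeasurable.mul hw.1))
    (((hw.norm.const_mul M).mono'
      ((hgc.comp (by continuity)).aestronglyMeasurable.mul hw.1)
      (Eventually.of_forall fun z => by
        rw [norm_mul]
        exact mul_le_mul_of_nonneg_right (hM _) (norm_nonneg _))))
    (((continuous_neg.smul (hgd.comp (by continuity))).aestronglyMeasurable).mul hw.1)
    (Eventually.of_forall fun z c _ => by
      rw [norm_mul, norm_smul, Real.norm_eq_abs, abs_neg]
      have := hM' (x - c * z)
      show |z| * ‖deriv g (x - c * z)‖ * ‖w z‖ ≤ M' * (|z| * ‖w z‖)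
      calc |z| * ‖deriv g (x - c * z)‖ * ‖w z‖
          = ‖deriv g (x - c * z)‖ * (|z| * ‖w z‖) := by ring
        _ ≤ M' * (|z| * ‖w z‖) :=
            mul_le_mul_of_nonneg_right this (by positivity))
    (hw1.const_mul M')
    (Eventually.of_forall fun z c _ => by
      have hin : HasDerivAt (fun c : ℝ => x - c * z) (-z) c :=
        (hasDerivAt_mul_const z).const_sub x
      have hd : HasDerivAt g (deriv g (x - c * z)) (x - c * z) :=
        ((hg.differentiable (by simp)) (x - c * z)).hasDerivAt
      have := (hd.scomp c hin).mul_const (w z)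
      simpa [Function.comp] using this)
  exact key.2

/-- Derivative (in the scale parameter) of the moment integrals. -/
lemma ap_F_hasDerivAt (ρ : SchwartzMap ℝ ℂ) (g : ℝ → ℂ) (hg : ContDiff ℝ (⊤ : ℕ∞) g)
    (Ms : ℕ → ℝ) (hMs : ∀ i t, ‖iteratedDeriv i g t‖ ≤ Ms i) (x : ℝ) (i : ℕ) (s : ℝ) :
    HasDerivAt (fun t => ∫ z : ℝ, iteratedDeriv i g (x - t * z) * ((-(z : ℂ)) ^ i * ρ z))
      (∫ z : ℝ, iteratedDeriv (i + 1) g (x - s * z) * ((-(z : ℂ)) ^ (i + 1) * ρ z)) s := by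
  have hMs' : ∀ t, ‖deriv (iteratedDeriv i g) t‖ ≤ Ms (i + 1) := fun t => by
    rw [← iteratedDeriv_succ]; exact hMs (i + 1) t
  have h := ap_hasDerivAt_param' (iteratedDeriv i g) (ap_iteratedDeriv_smooth hg i)
    (hMs i) hMs' (fun z : ℝ => (-(z : ℂ)) ^ i * ρ z) (ap_psi_integrable ρ i)
    (ap_psi_abs_integrable ρ i) x s
  have heq : (∫ z : ℝ, ((-z : ℝ) • deriv (iteratedDeriv i g) (x - s * z)) *
        ((-(z : ℂ)) ^ i * ρ z)) =
      ∫ z : ℝ, iteratedDeriv (i + 1) g (x - s * z) * ((-(z : ℂ)) ^ (i + 1) * ρ z) := by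
    refine integral_congr_ae (Eventually.of_forall fun z => ?_)
    show ((-z : ℝ) • deriv (iteratedDeriv i g) (x - s * z)) * ((-(z : ℂ)) ^ i * ρ z) =
      iteratedDeriv (i + 1) g (x - s * z) * ((-(z : ℂ)) ^ (i + 1) * ρ z)
    rw [iteratedDeriv_succ, Complex.real_smul, Complex.ofReal_neg, pow_succ]
    ring
  exact heq ▸ h

/-- The key chain of estimates coming from the vanishing moments. -/
lemma ap_chain (ρ : SchwartzMap ℝ ℂ)
    (hmom : ∀ k : ℕ, 1 ≤ k → ∫ x : ℝ, (x : ℂ) ^ k * ρ x = 0)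
    (g : ℝ → ℂ) (hg : ContDiff ℝ (⊤ : ℕ∞) g)
    (Ms : ℕ → ℝ) (hMs : ∀ i t, ‖iteratedDeriv i g t‖ ≤ Ms i) (x : ℝ) :
    ∀ n i : ℕ, 1 ≤ i → ∀ t : ℝ, 0 ≤ t →
      ‖∫ z : ℝ, iteratedDeriv i g (x - t * z) * ((-(z : ℂ)) ^ i * ρ z)‖ ≤
        (Ms (i + n) * ∫ z : ℝ, ‖z‖ ^ (i + n) * ‖ρ z‖) * t ^ n := by
  have hMsnn : ∀ i, 0 ≤ Ms i := fun i => (norm_nonneg _).trans (hMs i 0)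
  have hInn : ∀ i, 0 ≤ ∫ z : ℝ, ‖z‖ ^ i * ‖ρ z‖ :=
    fun i => integral_nonneg fun z => by positivity
  have hbase : ∀ (i : ℕ) (t : ℝ),
      ‖∫ z : ℝ, iteratedDeriv i g (x - t * z) * ((-(z : ℂ)) ^ i * ρ z)‖ ≤
        Ms i * ∫ z : ℝ, ‖z‖ ^ i * ‖ρ z‖ := by
    intro i t
    rw [← integral_const_mul]
    refine norm_integral_le_of_norm_le ((ρ.integrable_pow_mul volume i).const_mul (Ms i))
      (Eventually.of_forall fun z => ?_)
    rw [norm_mul, norm_mul, norm_pow, norm_neg, Complex.norm_real, ← mul_assoc]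
    have h1 : ‖iteratedDeriv i g (x - t * z)‖ * ‖(z : ℝ)‖ ^ i ≤ Ms i * ‖z‖ ^ i :=
      mul_le_mul_of_nonneg_right (hMs i _) (by positivity)
    calc ‖iteratedDeriv i g (x - t * z)‖ * ‖(z : ℝ)‖ ^ i * ‖ρ z‖
        ≤ Ms i * ‖z‖ ^ i * ‖ρ z‖ := mul_le_mul_of_nonneg_right h1 (norm_nonneg _)
      _ = Ms i * (‖z‖ ^ i * ‖ρ z‖) := by ring
  have hderiv := ap_F_hasDerivAt ρ g hg Ms hMs x
  have hzero : ∀ i : ℕ, 1 ≤ i →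
      (∫ z : ℝ, iteratedDeriv i g (x - 0 * z) * ((-(z : ℂ)) ^ i * ρ z)) = 0 := by
    intro i hi
    simp only [zero_mul, sub_zero]
    have hpsi : ∫ z : ℝ, (-(z : ℂ)) ^ i * ρ z = 0 := by
      have hfe : (fun z : ℝ => (-(z : ℂ)) ^ i * ρ z) =
          fun z : ℝ => ((-1 : ℂ) ^ i) * ((z : ℂ) ^ i * ρ z) := by
        funext z; ring
      rw [hfe, integral_const_mul, hmom i hi, mul_zero]
    rw [integral_const_mul, hpsi, mul_zero]
  intro n
  induction n with
  | zero =>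
    intro i _ t _
    simpa using hbase i t
  | succ n ih =>
    intro i hi t ht
    have hcont : Continuous (fun s => ∫ z : ℝ,
        iteratedDeriv (i + 1) g (x - s * z) * ((-(z : ℂ)) ^ (i + 1) * ρ z)) :=
      continuous_iff_continuousAt.mpr fun s => (hderiv (i + 1) s).continuousAt
    have hftc : (∫ s in (0:ℝ)..t, ∫ z : ℝ,
          iteratedDeriv (i + 1) g (x - s * z) * ((-(z : ℂ)) ^ (i + 1) * ρ z)) =
        (∫ z : ℝ, iteratedDeriv i g (x - t * z) * ((-(z : ℂ)) ^ i * ρ z)) -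
        (∫ z : ℝ, iteratedDeriv i g (x - 0 * z) * ((-(z : ℂ)) ^ i * ρ z)) :=
      intervalIntegral.integral_eq_sub_of_hasDerivAt (fun s _ => hderiv i s)
        (hcont.intervalIntegrable _ _)
    set B : ℝ := Ms (i + (n + 1)) * ∫ z : ℝ, ‖z‖ ^ (i + (n + 1)) * ‖ρ z‖ with hB
    have hBnn : 0 ≤ B := mul_nonneg (hMsnn _) (hInn _)
    have key : ‖∫ z : ℝ, iteratedDeriv i g (x - t * z) * ((-(z : ℂ)) ^ i * ρ z)‖ ≤
        |∫ s in (0:ℝ)..t, B * s ^ n| := by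
      rw [show (∫ z : ℝ, iteratedDeriv i g (x - t * z) * ((-(z : ℂ)) ^ i * ρ z)) =
        (∫ z : ℝ, iteratedDeriv i g (x - t * z) * ((-(z : ℂ)) ^ i * ρ z)) -
        (∫ z : ℝ, iteratedDeriv i g (x - 0 * z) * ((-(z : ℂ)) ^ i * ρ z)) by
          rw [hzero i hi, sub_zero]]
      rw [← hftc]
      refine intervalIntegral.norm_integral_le_abs_of_norm_le ?_
        ((continuous_const.mul (continuous_pow n)).intervalIntegrable _ _)
      rw [Set.uIoc_of_le ht]
      refine (ae_restrict_iff' measurableSet_Ioc).mpr (Eventually.of_forall fun s hs => ?_)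
      have hs0 : (0:ℝ) ≤ s := hs.1.le
      have := ih (i + 1) (by omega) s hs0
      have hidx : i + 1 + n = i + (n + 1) := by omega
      rw [hidx] at this
      exact this
    have hval : |∫ s in (0:ℝ)..t, B * s ^ n| = B * (t ^ (n + 1) / (n + 1)) := by
      rw [intervalIntegral.integral_const_mul, integral_pow, zero_pow (Nat.succ_ne_zero n),
        sub_zero, abs_of_nonneg (mul_nonneg hBnn (by positivity))]
    have hfin : B * (t ^ (n + 1) / (n + 1)) ≤ B * t ^ (n + 1) :=
      mul_le_mul_of_nonneg_left
        (div_le_self (by positivity) (by exact_mod_cast Nat.one_le_iff_ne_zero.mpr (by omega)))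
        hBnn
    calc ‖∫ z : ℝ, iteratedDeriv i g (x - t * z) * ((-(z : ℂ)) ^ i * ρ z)‖
        ≤ |∫ s in (0:ℝ)..t, B * s ^ n| := key
      _ = B * (t ^ (n + 1) / (n + 1)) := hval
      _ ≤ B * t ^ (n + 1) := hfin

/-- The main estimate: `‖(g * ρ_t)(x) - g(x)‖ ≤ C t^(m+1)`. -/
lemma ap_main_est (ρ : SchwartzMap ℝ ℂ) (h1 : ∫ x : ℝ, ρ x = 1)
    (hmom : ∀ k : ℕ, 1 ≤ k → ∫ x : ℝ, (x : ℂ) ^ k * ρ x = 0)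
    (g : ℝ → ℂ) (hg : ContDiff ℝ (⊤ : ℕ∞) g)
    (Ms : ℕ → ℝ) (hMs : ∀ i t, ‖iteratedDeriv i g t‖ ≤ Ms i) (x : ℝ) (m : ℕ)
    (t : ℝ) (ht : 0 ≤ t) :
    ‖(∫ z : ℝ, g (x - t * z) * ρ z) - g x‖ ≤
      (Ms (1 + m) * ∫ z : ℝ, ‖z‖ ^ (1 + m) * ‖ρ z‖) * t ^ (m + 1) := by
  have hMsnn : ∀ i, 0 ≤ Ms i := fun i => (norm_nonneg _).trans (hMs i 0)
  have hInn : ∀ i, 0 ≤ ∫ z : ℝ, ‖z‖ ^ i * ‖ρ z‖ :=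
    fun i => integral_nonneg fun z => by positivity
  have hF0eq : ∀ s : ℝ, (∫ z : ℝ, g (x - s * z) * ρ z) =
      ∫ z : ℝ, iteratedDeriv 0 g (x - s * z) * ((-(z : ℂ)) ^ 0 * ρ z) := by
    intro s
    refine integral_congr_ae (Eventually.of_forall fun z => ?_)
    simp [iteratedDeriv_zero]
  have hF00 : (∫ z : ℝ, iteratedDeriv 0 g (x - 0 * z) * ((-(z : ℂ)) ^ 0 * ρ z)) = g x := by
    rw [← hF0eq 0]
    simp only [zero_mul, sub_zero]
    rw [integral_const_mul, h1, mul_one]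
  have hderiv := ap_F_hasDerivAt ρ g hg Ms hMs x
  have hcont : Continuous (fun s => ∫ z : ℝ,
      iteratedDeriv 1 g (x - s * z) * ((-(z : ℂ)) ^ 1 * ρ z)) :=
    continuous_iff_continuousAt.mpr fun s => (hderiv 1 s).continuousAt
  have hftc : (∫ s in (0:ℝ)..t, ∫ z : ℝ,
        iteratedDeriv 1 g (x - s * z) * ((-(z : ℂ)) ^ 1 * ρ z)) =
      (∫ z : ℝ, iteratedDeriv 0 g (x - t * z) * ((-(z : ℂ)) ^ 0 * ρ z)) -
      (∫ z : ℝ, iteratedDeriv 0 g (x - 0 * z) * ((-(z : ℂ)) ^ 0 * ρ z)) :=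
    intervalIntegral.integral_eq_sub_of_hasDerivAt (fun s _ => hderiv 0 s)
      (hcont.intervalIntegrable _ _)
  set B : ℝ := Ms (1 + m) * ∫ z : ℝ, ‖z‖ ^ (1 + m) * ‖ρ z‖ with hB
  have hBnn : 0 ≤ B := mul_nonneg (hMsnn _) (hInn _)
  have key : ‖(∫ z : ℝ, g (x - t * z) * ρ z) - g x‖ ≤ |∫ s in (0:ℝ)..t, B * s ^ m| := by
    rw [hF0eq t, ← hF00, ← hftc]
    refine intervalIntegral.norm_integral_le_abs_of_norm_le ?_
      ((continuous_const.mul (continuous_pow m)).intervalIntegrable _ _)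
    rw [Set.uIoc_of_le ht]
    refine (ae_restrict_iff' measurableSet_Ioc).mpr (Eventually.of_forall fun s hs => ?_)
    exact ap_chain ρ hmom g hg Ms hMs x m 1 le_rfl s hs.1.le
  have hval : |∫ s in (0:ℝ)..t, B * s ^ m| = B * (t ^ (m + 1) / (m + 1)) := by
    rw [intervalIntegral.integral_const_mul, integral_pow, zero_pow (Nat.succ_ne_zero m),
      sub_zero, abs_of_nonneg (mul_nonneg hBnn (by positivity))]
  have hfin : B * (t ^ (m + 1) / (m + 1)) ≤ B * t ^ (m + 1) :=
    mul_le_mul_of_nonneg_left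
      (div_le_self (by positivity) (by exact_mod_cast Nat.one_le_iff_ne_zero.mpr (by omega)))
      hBnn
  calc ‖(∫ z : ℝ, g (x - t * z) * ρ z) - g x‖
      ≤ |∫ s in (0:ℝ)..t, B * s ^ m| := key
    _ = B * (t ^ (m + 1) / (m + 1)) := hval
    _ ≤ B * t ^ (m + 1) := hfin

/-- Derivatives pass through the mollification. -/
lemma ap_iteratedDeriv_conv (f : ℝ → ℂ) (hf : ContDiff ℝ (⊤ : ℕ∞) f)
    (Ms : ℕ → ℝ) (hMs : ∀ j t, ‖iteratedDeriv j f t‖ ≤ Ms j)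
    (w : ℝ → ℂ) (hw : Integrable w) (c : ℝ) (j : ℕ) :
    iteratedDeriv j (fun x => (∫ z : ℝ, f (x - c * z) * w z) - f x) =
      fun x => (∫ z : ℝ, iteratedDeriv j f (x - c * z) * w z) - iteratedDeriv j f x := by
  induction j with
  | zero => simp [iteratedDeriv_zero]
  | succ j ih =>
    rw [iteratedDeriv_succ, ih]
    funext x
    have hMs' : ∀ t, ‖deriv (iteratedDeriv j f) t‖ ≤ Ms (j + 1) := fun t => by
      rw [← iteratedDeriv_succ]; exact hMs (j + 1) t
    have h1 := ap_hasDerivAt_param (iteratedDeriv j f) (ap_iteratedDeriv_smooth hf j)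
      (hMs j) hMs' w hw c x
    have h2 : HasDerivAt (iteratedDeriv j f) (deriv (iteratedDeriv j f) x) x :=
      (((ap_iteratedDeriv_smooth hf j).differentiable (by simp)) x).hasDerivAt
    have h3 := (h1.sub h2).deriv
    rw [iteratedDeriv_succ]
    exact h3

/-- for `f ∈ 𝓑_ap` and `ρ ∈ Σ`, the net `(f * ρ_ε - f)_ε` is negligible,
so the canonical and regularization embeddings of `𝓑_ap` into `𝓖_ap` coincide. -/
theorem embedding_commutes (ρ : SchwartzMap ℝ ℂ)
    (h1 : ∫ x : ℝ, ρ x = 1)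
    (hmom : ∀ k : ℕ, 1 ≤ k → ∫ x : ℝ, (x : ℂ) ^ k * ρ x = 0)
    (f : ℝ → ℂ) (hf : BAp f) :
    Negligible (fun ε x =>
      (∫ y : ℝ, f (x - y) * ((ε : ℂ)⁻¹ * ρ (y / ε))) - f x) := by
  intro k m
  have hs := hf.1
  choose Ms hMs using fun j => (hf.2 j).exists_bound
  have hMsnn : ∀ j, 0 ≤ Ms j := fun j => (norm_nonneg _).trans (hMs j 0)
  have hInn : 0 ≤ ∫ z : ℝ, ‖z‖ ^ (1 + m) * ‖ρ z‖ :=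
    integral_nonneg fun z => by positivity
  set I : ℝ := ∫ z : ℝ, ‖z‖ ^ (1 + m) * ‖ρ z‖ with hI
  set C : ℝ := (∑ j ∈ Finset.range (k + 1), Ms (1 + m + j) * I) + 1 with hC
  have hCpos : 0 < C := by
    have : 0 ≤ ∑ j ∈ Finset.range (k + 1), Ms (1 + m + j) * I :=
      Finset.sum_nonneg fun j _ => mul_nonneg (hMsnn _) hInn
    rw [hC]; linarith
  refine ⟨C, hCpos, 1, ⟨one_pos, le_rfl⟩, fun ε hε _ => ?_⟩
  obtain ⟨hε0, hε1⟩ := hε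
  -- rewrite the mollified function via a change of variables
  have hfun : (fun x => (∫ y : ℝ, f (x - y) * ((ε : ℂ)⁻¹ * ρ (y / ε))) - f x) =
      fun x => (∫ z : ℝ, f (x - ε * z) * ρ z) - f x := by
    funext x
    congr 1
    have step1 : (∫ y : ℝ, f (x - y) * ((ε : ℂ)⁻¹ * ρ (y / ε))) =
        (ε : ℂ)⁻¹ * ∫ y : ℝ, f (x - y) * ρ (y / ε) := by
      rw [← integral_const_mul]
      exact integral_congr_ae (Eventually.of_forall fun y => by ring)
    have step2 : (∫ y : ℝ, f (x - y) * ρ (y / ε)) =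
        ∫ y : ℝ, (fun z : ℝ => f (x - ε * z) * ρ z) (y / ε) := by
      refine integral_congr_ae (Eventually.of_forall fun y => ?_)
      show f (x - y) * ρ (y / ε) = f (x - ε * (y / ε)) * ρ (y / ε)
      rw [show x - ε * (y / ε) = x - y by field_simp]
    have step3 : (∫ y : ℝ, (fun z : ℝ => f (x - ε * z) * ρ z) (y / ε)) =
        |ε| • ∫ z : ℝ, f (x - ε * z) * ρ z :=
      MeasureTheory.Measure.integral_comp_div (fun z : ℝ => f (x - ε * z) * ρ z) ε
    rw [step1, step2, step3, abs_of_pos hε0, Complex.real_smul, ← mul_assoc,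
      inv_mul_cancel₀ (by exact_mod_cast ne_of_gt hε0), one_mul]
  show apSeminorm k (fun x => (∫ y : ℝ, f (x - y) * ((ε : ℂ)⁻¹ * ρ (y / ε))) - f x) ≤ C * ε ^ m
  rw [hfun]
  have hconv := ap_iteratedDeriv_conv f hs Ms hMs (fun z => ρ z) ρ.integrable ε
  -- per-level estimate
  have hlev : ∀ j, (⨆ x : ℝ, ‖iteratedDeriv j
      (fun x => (∫ z : ℝ, f (x - ε * z) * ρ z) - f x) x‖) ≤ (Ms (1 + m + j) * I) * ε ^ m := by
    intro j
    refine ciSup_le fun x => ?_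
    rw [hconv j]
    have hMs2 : ∀ i t, ‖iteratedDeriv i (iteratedDeriv j f) t‖ ≤ Ms (i + j) := fun i t => by
      rw [ap_iteratedDeriv_iteratedDeriv]; exact hMs _ t
    have hest := ap_main_est ρ h1 hmom (iteratedDeriv j f) (ap_iteratedDeriv_smooth hs j)
      (fun i => Ms (i + j)) hMs2 x m ε hε0.le
    have hmono : (Ms (1 + m + j) * I) * ε ^ (m + 1) ≤ (Ms (1 + m + j) * I) * ε ^ m :=
      mul_le_mul_of_nonneg_left
        (pow_le_pow_of_le_one hε0.le hε1 (by omega))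
        (mul_nonneg (hMsnn _) hInn)
    exact le_trans (by simpa only using hest) hmono
  -- sum up
  unfold apSeminorm
  calc (∑ j ∈ Finset.range (k + 1), ⨆ x : ℝ, ‖iteratedDeriv j
        (fun x => (∫ z : ℝ, f (x - ε * z) * ρ z) - f x) x‖)
      ≤ ∑ j ∈ Finset.range (k + 1), (Ms (1 + m + j) * I) * ε ^ m :=
        Finset.sum_le_sum fun j _ => hlev j
    _ = (∑ j ∈ Finset.range (k + 1), Ms (1 + m + j) * I) * ε ^ m := by
        rw [Finset.sum_mul]
    _ ≤ C * ε ^ m := by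
        have : (0:ℝ) ≤ ε ^ m := by positivity
        have h := Finset.sum_nonneg (fun j (_ : j ∈ Finset.range (k+1)) =>
          mul_nonneg (hMsnn (1 + m + j)) hInn)
        nlinarith [hCpos]
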